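/- Let p > 0 and for ε > 0 define G_{1,ε}(t,s) = -e^{-ε√p|t-s|}·(1-e^{-2ε√p·min(t,s)})·(1-e^{-2ε√p·(1-max(t,s))}) / (2ε√p·(1-e^{-2ε√p})) on [0,1]×[0,1], and Υ(t,s) = -min(t,s)·(1-max(t,s)). For each fixed s, both G_{1,ε}(·,s) and Υ(·,s) are differentiable in t at every t ≠ s, and sup_{t≠s, t,s ∈ [0,1]} |∂G_{1,ε}/∂t (t,s) - ∂Υ/∂t (t,s)| → 0 as ε → 0⁺. -/

import Mathlib

open Filter Set

set_option maxHeartbeats 1000000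

noncomputable def Gfun (a s : ℝ) : ℝ → ℝ := fun u =>
  -(Real.exp (-(a * |u - s|)) *
      (1 - Real.exp (-(2 * a * min u s))) *
      (1 - Real.exp (-(2 * a * (1 - max u s))))) /
    (2 * a * (1 - Real.exp (-(2 * a))))

noncomputable def Yfun (s : ℝ) : ℝ → ℝ := fun u => -(min u s * (1 - max u s))

lemma key_bound (a x y d E : ℝ) (ha : 0 < a) (hx : 0 ≤ x) (hy : 0 ≤ y) (hd : 0 ≤ d)
    (hsum : x + y + d = 1)
    (hE : E = y - (1 - Real.exp (-(2*a*y))) *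
        (Real.exp (-(a*d)) + Real.exp (-(a*d) - 2*a*x)) /
        (2*(1 - Real.exp (-(2*a))))) :
    |E| ≤ Real.exp (5*a) - 1 := by
  have hx1 : x ≤ 1 := by linarith
  have hy1 : y ≤ 1 := by linarith
  have hd1 : d ≤ 1 := by linarith
  set q := Real.exp (-(2*a)) with hq
  have hqpos : 0 < q := Real.exp_pos _
  have hq1 : q < 1 := Real.exp_lt_one_iff.mpr (by linarith)
  have hDn : (0:ℝ) < 2*(1 - q) := by linarith
  set A1 := 1 - Real.exp (-(2*a*y)) with hA1
  set A2 := Real.exp (-(a*d)) + Real.exp (-(a*d) - 2*a*x) with hA2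
  have hA1nn : 0 ≤ A1 := by
    have : Real.exp (-(2*a*y)) ≤ 1 := Real.exp_le_one_iff.mpr (by nlinarith)
    linarith
  have hA2nn : 0 ≤ A2 := by positivity
  -- auxiliary exp facts
  have hqe : q * Real.exp (2*a) = 1 := by
    rw [hq, ← Real.exp_add]; simp
  have he2a : 1 + 2*a ≤ Real.exp (2*a) := by
    have := Real.add_one_le_exp (2*a); linarith
  have hqlow : 2*a*q ≤ 1 - q := by nlinarith
  have hDnup : 2*(1-q) ≤ 4*a := by
    have := Real.add_one_le_exp (-(2*a)); simp only [← hq] at this; linarith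
  -- upper bound on A1
  have huA1 : A1 ≤ 2*a*y := by
    have := Real.add_one_le_exp (-(2*a*y)); rw [hA1]; linarith
  -- upper bound on A2
  have huA2 : A2 ≤ 2 := by
    have h1 : Real.exp (-(a*d)) ≤ 1 := Real.exp_le_one_iff.mpr (by nlinarith)
    have h2 : Real.exp (-(a*d) - 2*a*x) ≤ 1 := Real.exp_le_one_iff.mpr (by nlinarith)
    rw [hA2]; linarith
  -- lower bound on A1 : 2*a*y*q ≤ A1
  have hlA1 : 2*a*y*q ≤ A1 := by
    have h1 : Real.exp (-(2*a*y)) * Real.exp (2*a*y) = 1 := by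
      rw [← Real.exp_add]; simp
    have h2 : 1 + 2*a*y ≤ Real.exp (2*a*y) := by
      have := Real.add_one_le_exp (2*a*y); linarith
    have h3 : 2*a*y*Real.exp (-(2*a*y)) ≤ A1 := by
      rw [hA1]
      nlinarith [Real.exp_pos (-(2*a*y))]
    have h4 : q ≤ Real.exp (-(2*a*y)) := Real.exp_le_exp.mpr (by nlinarith)
    nlinarith
  -- lower bound on A2 : 2 * exp (-(3a)) ≤ A2
  have hlA2 : 2 * Real.exp (-(3*a)) ≤ A2 := by
    have h1 : Real.exp (-(3*a)) ≤ Real.exp (-(a*d)) := Real.exp_le_exp.mpr (by nlinarith)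
    have h2 : Real.exp (-(3*a)) ≤ Real.exp (-(a*d) - 2*a*x) := Real.exp_le_exp.mpr (by nlinarith)
    rw [hA2]; linarith
  -- upper: A1*A2/Dn ≤ y * exp (2a)
  have hup : A1*A2/(2*(1-q)) ≤ y * Real.exp (2*a) := by
    rw [div_le_iff₀ hDn]
    have hN : A1*A2 ≤ 4*a*y := by nlinarith
    have : 4*a*y = y * Real.exp (2*a) * (4*a*q) := by
      have : y * Real.exp (2*a) * (4*a*q) = 4*a*y*(q * Real.exp (2*a)) := by ring
      rw [this, hqe]; ring
    nlinarith [Real.exp_pos (2*a)]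
  -- lower: y * exp (-(5a)) ≤ A1*A2/Dn
  have hlo : y * Real.exp (-(5*a)) ≤ A1*A2/(2*(1-q)) := by
    rw [le_div_iff₀ hDn]
    have hsplit : Real.exp (-(5*a)) = q * Real.exp (-(3*a)) := by
      rw [hq, ← Real.exp_add]; congr 1; ring
    have hN : 4*a*y*(q * Real.exp (-(3*a))) ≤ A1*A2 := by
      nlinarith [Real.exp_pos (-(3*a))]
    rw [hsplit]
    nlinarith [mul_le_mul_of_nonneg_left hDnup
      (mul_nonneg hy (mul_nonneg hqpos.le (Real.exp_pos (-(3*a))).le)), hN]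
  -- conclude
  have hE5 : (1:ℝ) ≤ Real.exp (5*a) := by
    have := Real.add_one_le_exp (5*a); linarith
  have hE25 : Real.exp (2*a) ≤ Real.exp (5*a) := Real.exp_le_exp.mpr (by linarith)
  have hinv : Real.exp (-(5*a)) * Real.exp (5*a) = 1 := by
    rw [← Real.exp_add]; simp
  rw [hE, abs_le]
  constructor
  · nlinarith
  · nlinarith [Real.exp_pos (-(5*a)), Real.exp_pos (5*a)]

lemma pointwise (a s t : ℝ) (ha : 0 < a) (hs : s ∈ Set.Icc (0:ℝ) 1)
    (ht : t ∈ Set.Icc (0:ℝ) 1) (hne : t ≠ s) :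
    DifferentiableAt ℝ (Gfun a s) t ∧ DifferentiableAt ℝ (Yfun s) t ∧
      |deriv (Gfun a s) t - deriv (Yfun s) t| ≤ Real.exp (5*a) - 1 := by
  have hq1 : Real.exp (-(2*a)) < 1 := Real.exp_lt_one_iff.mpr (by linarith)
  have hDpos : (0:ℝ) < 2*a*(1 - Real.exp (-(2*a))) := by
    have : (0:ℝ) < 2*a := by linarith
    nlinarith
  have hDne : (2*a*(1 - Real.exp (-(2*a)))) ≠ 0 := ne_of_gt hDpos
  have hane : a ≠ 0 := ne_of_gt ha
  have hqne : (1 - Real.exp (-(2*a))) ≠ 0 := by nlinarith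
  rcases lt_or_gt_of_ne hne with hlt | hgt
  · -- t < s
    set C := 1 - Real.exp (-(2*a*(1-s))) with hC
    set D := 2*a*(1 - Real.exp (-(2*a))) with hD
    have hmem : Set.Iio s ∈ nhds t := Iio_mem_nhds hlt
    have heq : Gfun a s =ᶠ[nhds t]
        (fun u => -((Real.exp (a*u - a*s) - Real.exp (-(a*u) - a*s)) * C) / D) := by
      filter_upwards [hmem] with u hu
      have hu' : u < s := hu
      unfold Gfun
      rw [abs_of_neg (sub_neg.mpr hu'), min_eq_left hu'.le, max_eq_right hu'.le]
      rw [show -(a * -(u - s)) = a*u - a*s by ring]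
      have e1 : Real.exp (a*u - a*s) * (1 - Real.exp (-(2*a*u)))
          = Real.exp (a*u - a*s) - Real.exp (-(a*u) - a*s) := by
        rw [mul_one_sub, ← Real.exp_add, show a*u - a*s + -(2*a*u) = -(a*u) - a*s by ring]
      rw [← hC, ← hD, ← e1]
    have h1 : HasDerivAt (fun u : ℝ => a*u - a*s) a t := by
      simpa using ((hasDerivAt_id t).const_mul a).sub_const (a*s)
    have h2 : HasDerivAt (fun u : ℝ => -(a*u) - a*s) (-a) t := by
      simpa using (((hasDerivAt_id t).const_mul a).neg).sub_const (a*s)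
    have hder : HasDerivAt
        (fun u => -((Real.exp (a*u - a*s) - Real.exp (-(a*u) - a*s)) * C) / D)
        (-((Real.exp (a*t - a*s) * a - Real.exp (-(a*t) - a*s) * (-a)) * C) / D) t :=
      (((h1.exp.sub h2.exp).mul_const C).neg).div_const D
    have hGder : HasDerivAt (Gfun a s)
        (-((Real.exp (a*t - a*s) * a - Real.exp (-(a*t) - a*s) * (-a)) * C) / D) t :=
      hder.congr_of_eventuallyEq heq
    have hYeq : Yfun s =ᶠ[nhds t] (fun u => -(u * (1-s))) := by
      filter_upwards [hmem] with u hu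
      unfold Yfun
      rw [min_eq_left (le_of_lt hu), max_eq_right (le_of_lt hu)]
    have hYder : HasDerivAt (Yfun s) (-(1-s)) t := by
      have : HasDerivAt (fun u : ℝ => -(u * (1-s))) (-(1-s)) t := by
        simpa using ((hasDerivAt_id t).mul_const (1-s)).fun_neg
      exact this.congr_of_eventuallyEq hYeq
    refine ⟨hGder.differentiableAt, hYder.differentiableAt, ?_⟩
    rw [hGder.deriv, hYder.deriv]
    set v := -((Real.exp (a*t - a*s) * a - Real.exp (-(a*t) - a*s) * (-a)) * C) / D with hv
    have hkb := key_bound a t (1-s) (s-t) (v + (1-s)) ha ht.1 (by linarith [hs.2])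
      (by linarith) (by ring) ?_
    · rwa [sub_neg_eq_add]
    · rw [hv, hD, hC]
      rw [show a*t - a*s = -(a*(s-t)) by ring,
          show -(a*t) - a*s = -(a*(s-t)) - 2*a*t by ring]
      field_simp
      ring
  · -- s < t
    set B := 1 - Real.exp (-(2*a*s)) with hB
    set D := 2*a*(1 - Real.exp (-(2*a))) with hD
    have hmem : Set.Ioi s ∈ nhds t := Ioi_mem_nhds hgt
    have heq : Gfun a s =ᶠ[nhds t]
        (fun u => -((Real.exp (a*s - a*u) - Real.exp (a*s + a*u - 2*a)) * B) / D) := by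
      filter_upwards [hmem] with u hu
      have hu' : s < u := hu
      unfold Gfun
      rw [abs_of_pos (sub_pos.mpr hu'), min_eq_right hu'.le, max_eq_left hu'.le]
      rw [show -(a * (u - s)) = a*s - a*u by ring]
      have e1 : Real.exp (a*s - a*u) * (1 - Real.exp (-(2*a*(1-u))))
          = Real.exp (a*s - a*u) - Real.exp (a*s + a*u - 2*a) := by
        rw [mul_one_sub, ← Real.exp_add,
          show a*s - a*u + -(2*a*(1-u)) = a*s + a*u - 2*a by ring]
      rw [← hB, ← hD]
      rw [show Real.exp (a*s - a*u) * B * (1 - Real.exp (-(2*a*(1-u))))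
          = Real.exp (a*s - a*u) * (1 - Real.exp (-(2*a*(1-u)))) * B by ring, e1]
    have h1 : HasDerivAt (fun u : ℝ => a*s - a*u) (-a) t := by
      simpa using ((hasDerivAt_id t).const_mul a).const_sub (a*s)
    have h2 : HasDerivAt (fun u : ℝ => a*s + a*u - 2*a) a t := by
      simpa using (((hasDerivAt_id t).const_mul a).const_add (a*s)).sub_const (2*a)
    have hder : HasDerivAt
        (fun u => -((Real.exp (a*s - a*u) - Real.exp (a*s + a*u - 2*a)) * B) / D)
        (-((Real.exp (a*s - a*t) * (-a) - Real.exp (a*s + a*t - 2*a) * a) * B) / D) t :=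
      (((h1.exp.sub h2.exp).mul_const B).neg).div_const D
    have hGder : HasDerivAt (Gfun a s)
        (-((Real.exp (a*s - a*t) * (-a) - Real.exp (a*s + a*t - 2*a) * a) * B) / D) t :=
      hder.congr_of_eventuallyEq heq
    have hYeq : Yfun s =ᶠ[nhds t] (fun u => -(s * (1-u))) := by
      filter_upwards [hmem] with u hu
      unfold Yfun
      rw [min_eq_right (le_of_lt hu), max_eq_left (le_of_lt hu)]
    have hYder : HasDerivAt (Yfun s) s t := by
      have h0 : HasDerivAt (fun u : ℝ => 1 - u) (-1) t := by
        simpa using (hasDerivAt_id t).const_sub 1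
      have : HasDerivAt (fun u : ℝ => -(s * (1-u))) (-(s * (-1))) t :=
        (h0.const_mul s).neg
      simpa using this.congr_of_eventuallyEq hYeq
    refine ⟨hGder.differentiableAt, hYder.differentiableAt, ?_⟩
    rw [hGder.deriv, hYder.deriv]
    set v := -((Real.exp (a*s - a*t) * (-a) - Real.exp (a*s + a*t - 2*a) * a) * B) / D with hv
    rw [abs_sub_comm]
    have hkb := key_bound a (1-t) s (t-s) (s - v) ha (by linarith [ht.2]) hs.1
      (by linarith) (by ring) ?_
    · exact hkb
    · rw [hv, hD, hB]
      rw [show a*s - a*t = -(a*(t-s)) by ring,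
          show a*s + a*t - 2*a = -(a*(t-s)) - 2*a*(1-t) by ring]
      field_simp
      ring

theorem green_dirichlet_derivative_uniform_limit (p : ℝ) (hp : 0 < p)
    (G : ℝ → ℝ → ℝ → ℝ)
    (hG : ∀ ε t s, G ε t s =
      -(Real.exp (-(ε * Real.sqrt p * |t - s|)) *
          (1 - Real.exp (-(2 * ε * Real.sqrt p * min t s))) *
          (1 - Real.exp (-(2 * ε * Real.sqrt p * (1 - max t s))))) /
        (2 * ε * Real.sqrt p * (1 - Real.exp (-(2 * ε * Real.sqrt p)))))
    (Υ : ℝ → ℝ → ℝ)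
    (hΥ : ∀ t s, Υ t s = -(min t s * (1 - max t s))) :
    (∀ ε : ℝ, 0 < ε → ∀ s ∈ Set.Icc (0:ℝ) 1, ∀ t ∈ Set.Icc (0:ℝ) 1, t ≠ s →
        DifferentiableAt ℝ (fun u => G ε u s) t ∧
        DifferentiableAt ℝ (fun u => Υ u s) t) ∧
    Tendsto
      (fun ε : ℝ =>
        sSup {r : ℝ | ∃ t ∈ Set.Icc (0:ℝ) 1, ∃ s ∈ Set.Icc (0:ℝ) 1, t ≠ s ∧
          r = |deriv (fun u => G ε u s) t - deriv (fun u => Υ u s) t|})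
      (nhdsWithin 0 (Set.Ioi 0)) (nhds 0) := by
  have hsp : 0 < Real.sqrt p := Real.sqrt_pos.mpr hp
  have hGfun : ∀ ε s, (fun u => G ε u s) = Gfun (ε * Real.sqrt p) s := by
    intro ε s
    funext u
    rw [hG]
    unfold Gfun
    ring_nf
  have hYfun : ∀ s, (fun u => Υ u s) = Yfun s := by
    intro s
    funext u
    rw [hΥ]
    rfl
  constructor
  · intro ε hε s hs t ht hne
    have ha : 0 < ε * Real.sqrt p := by positivity
    obtain ⟨h1, h2, _⟩ := pointwise (ε * Real.sqrt p) s t ha hs ht hne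
    rw [hGfun, hYfun]
    exact ⟨h1, h2⟩
  · have hbd : ∀ ε : ℝ, 0 < ε →
        sSup {r : ℝ | ∃ t ∈ Set.Icc (0:ℝ) 1, ∃ s ∈ Set.Icc (0:ℝ) 1, t ≠ s ∧
          r = |deriv (fun u => G ε u s) t - deriv (fun u => Υ u s) t|}
          ≤ Real.exp (5*(ε * Real.sqrt p)) - 1 := by
      intro ε hε
      have ha : 0 < ε * Real.sqrt p := by positivity
      apply Real.sSup_le
      · rintro r ⟨t, ht, s, hs, hne, rfl⟩
        rw [hGfun, hYfun]
        exact (pointwise (ε * Real.sqrt p) s t ha hs ht hne).2.2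
      · have := Real.add_one_le_exp (5*(ε * Real.sqrt p)); nlinarith
    have hnn : ∀ ε : ℝ, 0 < ε →
        0 ≤ sSup {r : ℝ | ∃ t ∈ Set.Icc (0:ℝ) 1, ∃ s ∈ Set.Icc (0:ℝ) 1, t ≠ s ∧
          r = |deriv (fun u => G ε u s) t - deriv (fun u => Υ u s) t|} := by
      intro ε hε
      apply Real.sSup_nonneg
      rintro r ⟨t, ht, s, hs, hne, rfl⟩
      exact abs_nonneg _
    have hub : Tendsto (fun ε : ℝ => Real.exp (5*(ε * Real.sqrt p)) - 1)
        (nhdsWithin 0 (Set.Ioi 0)) (nhds 0) := by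
      have hc : Continuous (fun ε : ℝ => Real.exp (5*(ε * Real.sqrt p)) - 1) := by
        continuity
      have := hc.tendsto 0
      simp only [mul_zero, zero_mul, mul_zero, Real.exp_zero] at this
      norm_num at this
      exact this.mono_left nhdsWithin_le_nhds
    apply tendsto_of_tendsto_of_tendsto_of_le_of_le' tendsto_const_nhds hub
    · filter_upwards [self_mem_nhdsWithin] with ε hε
      exact hnn ε hε
    · filter_upwards [self_mem_nhdsWithin] with ε hε
      exact hbd ε hε
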